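/- For every real z > 0, 1/z² − 1/12 ≤ e^z·((e^z + 1)·z − e^z + 1)/(e^z − 1)³ ≤ 1/z² + 1. -/

import Mathlib

open Real

/- Series building blocks -/
private lemma hs0 (a z : ℝ) :
    HasSum (fun n : ℕ => a ^ n * z ^ n / n.factorial) (Real.exp (a * z)) := by
  have := NormedSpace.expSeries_div_hasSum_exp (a * z)
  rw [← Real.exp_eq_exp_ℝ] at this
  simpa [mul_pow] using this

private lemma hs2 (a z : ℝ) :
    HasSum (fun n : ℕ => (n : ℝ) * ((n : ℝ) - 1) * a ^ n * z ^ n / n.factorial)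
      (a ^ 2 * z ^ 2 * Real.exp (a * z)) := by
  refine (hasSum_nat_add_iff' 2).mp ?_
  have key : ∀ n : ℕ, ((n + 2 : ℕ) : ℝ) * (((n + 2 : ℕ) : ℝ) - 1) * a ^ (n + 2) * z ^ (n + 2)
        / (n + 2).factorial = a ^ 2 * z ^ 2 * (a ^ n * z ^ n / n.factorial) := by
    intro n
    have h1 : ((n + 2).factorial : ℝ) = ((n : ℝ) + 2) * ((n : ℝ) + 1) * n.factorial := by
      push_cast [Nat.factorial_succ]; ring
    have h2 : (n.factorial : ℝ) ≠ 0 := by positivity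
    push_cast
    rw [h1]; field_simp; ring
  simp only [key]
  simpa [Finset.sum_range_succ] using (hs0 a z).mul_left (a ^ 2 * z ^ 2)

private lemma hs3 (a z : ℝ) :
    HasSum (fun n : ℕ => (n : ℝ) * ((n : ℝ) - 1) * ((n : ℝ) - 2) * a ^ n * z ^ n / n.factorial)
      (a ^ 3 * z ^ 3 * Real.exp (a * z)) := by
  refine (hasSum_nat_add_iff' 3).mp ?_
  have key : ∀ n : ℕ, ((n + 3 : ℕ) : ℝ) * (((n + 3 : ℕ) : ℝ) - 1) * (((n + 3 : ℕ) : ℝ) - 2)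
        * a ^ (n + 3) * z ^ (n + 3) / (n + 3).factorial
        = a ^ 3 * z ^ 3 * (a ^ n * z ^ n / n.factorial) := by
    intro n
    have h1 : ((n + 3).factorial : ℝ)
        = ((n : ℝ) + 3) * ((n : ℝ) + 2) * ((n : ℝ) + 1) * n.factorial := by
      push_cast [Nat.factorial_succ]; ring
    have h2 : (n.factorial : ℝ) ≠ 0 := by positivity
    push_cast
    rw [h1]; field_simp; ring
  simp only [key]
  simpa [Finset.sum_range_succ] using (hs0 a z).mul_left (a ^ 3 * z ^ 3)

/- coefficients of the lower-bound series -/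
private noncomputable def cL (n : ℕ) : ℝ :=
  (n:ℝ)*((n:ℝ)-1)*3^n/108 - 3^n + (n:ℝ)*((n:ℝ)-1)*((n:ℝ)-2)*2^n/8
    - 5*((n:ℝ)*((n:ℝ)-1))*2^n/16 + 3*2^n + (n:ℝ)*((n:ℝ)-1)*((n:ℝ)-2)
    + 5*((n:ℝ)*((n:ℝ)-1))/4 - 3

/- coefficients of the upper-bound series -/
private noncomputable def cU (n : ℕ) : ℝ :=
  3^n + (n:ℝ)*((n:ℝ)-1)*3^n/9 - 3*2^n - (n:ℝ)*((n:ℝ)-1)*2^n/2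
    - (n:ℝ)*((n:ℝ)-1)*((n:ℝ)-2)*2^n/8 + 3 + 2*((n:ℝ)*((n:ℝ)-1))
    - (n:ℝ)*((n:ℝ)-1)*((n:ℝ)-2)

private lemma hsL (z : ℝ) : HasSum (fun n : ℕ => cL n * (z ^ n / n.factorial))
    (Real.exp z ^ 3 * z^2/12 - Real.exp z ^ 3 + z^3*Real.exp z^2 - 5*z^2*Real.exp z^2/4
      + 3*Real.exp z^2 + z^3*Real.exp z + 5*z^2*Real.exp z/4 - 3*Real.exp z) := by
  have e2 : Real.exp (2*z) = Real.exp z ^ 2 := by rw [two_mul, Real.exp_add]; ring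
  have e3 : Real.exp (3*z) = Real.exp z ^ 3 := by
    rw [show (3:ℝ)*z = z+z+z by ring, Real.exp_add, Real.exp_add]; ring
  have e1 : Real.exp (1*z) = Real.exp z := by rw [one_mul]
  have h := ((((((((hs2 3 z).div_const 108).sub (hs0 3 z)).add ((hs3 2 z).div_const 8)).sub
    (((hs2 2 z).mul_left 5).div_const 16)).add ((hs0 2 z).mul_left 3)).add (hs3 1 z)).add
    (((hs2 1 z).mul_left 5).div_const 4)).sub ((hs0 1 z).mul_left 3)
  convert h using 1
  · rfl
  · funext n; simp only [cL]; ring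
  · rw [e1, e2, e3]; ring

private lemma hsU (z : ℝ) : HasSum (fun n : ℕ => cU n * (z ^ n / n.factorial))
    (Real.exp z ^ 3 + z^2*Real.exp z^3 - 3*Real.exp z^2 - 2*z^2*Real.exp z^2
      - z^3*Real.exp z^2 + 3*Real.exp z + 2*z^2*Real.exp z - z^3*Real.exp z) := by
  have e2 : Real.exp (2*z) = Real.exp z ^ 2 := by rw [two_mul, Real.exp_add]; ring
  have e3 : Real.exp (3*z) = Real.exp z ^ 3 := by
    rw [show (3:ℝ)*z = z+z+z by ring, Real.exp_add, Real.exp_add]; ring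
  have e1 : Real.exp (1*z) = Real.exp z := by rw [one_mul]
  have h := (((((((hs0 3 z).add ((hs2 3 z).div_const 9)).sub ((hs0 2 z).mul_left 3)).sub
    ((hs2 2 z).div_const 2)).sub ((hs3 2 z).div_const 8)).add ((hs0 1 z).mul_left 3)).add
    ((hs2 1 z).mul_left 2)).sub (hs3 1 z)
  convert h using 1
  · rfl
  · funext n; simp only [cU]; ring
  · rw [e1, e2, e3]; ring

private lemma k1 (n : ℕ) : n^2 * 2^n ≤ 4 * 3^n := by
  induction n using Nat.strong_induction_on with
  | _ n ih =>
    match n, ih with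
    | 0, _ => norm_num
    | 1, _ => norm_num
    | 2, _ => norm_num
    | 3, _ => norm_num
    | 4, _ => norm_num
    | 5, _ => norm_num
    | (m+6), ih =>
      have h := ih (m+5) (by omega)
      have hstep : 2*(m+6)^2 ≤ 3*(m+5)^2 := by zify; nlinarith [sq_nonneg (m:ℤ), Int.natCast_nonneg m]
      calc (m+6)^2 * 2^(m+6) = (2*(m+6)^2) * 2^(m+5) := by ring
        _ ≤ (3*(m+5)^2) * 2^(m+5) := Nat.mul_le_mul_right _ hstep
        _ = 3 * ((m+5)^2 * 2^(m+5)) := by ring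
        _ ≤ 3 * (4 * 3^(m+5)) := Nat.mul_le_mul_left _ h
        _ = 4 * 3^(m+6) := by ring

private lemma k2 (n : ℕ) (h : 10 ≤ n) : n^3 ≤ 2^n := by
  induction n, h using Nat.le_induction with
  | base => norm_num
  | succ m hm ih =>
    have hstep : (m+1)^3 ≤ 2*m^3 := by zify; nlinarith [sq_nonneg ((m:ℤ)-3), hm]
    calc (m+1)^3 ≤ 2*m^3 := hstep
      _ ≤ 2 * 2^m := Nat.mul_le_mul_left _ ih
      _ = 2^(m+1) := by ring

private lemma cL_nonneg (n : ℕ) (h : 1 ≤ n) : 0 ≤ cL n := by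
  rcases le_or_gt n 10 with hn | hn
  · interval_cases n <;> norm_num [cL]
  · have hm : (11:ℝ) ≤ (n:ℝ) := by exact_mod_cast hn
    have p2 : (0:ℝ) ≤ 2^n := by positivity
    have p3 : (0:ℝ) ≤ 3^n := by positivity
    have A : (0:ℝ) ≤ (n:ℝ)*((n:ℝ)-1)/108 - 1 := by nlinarith
    have B : (0:ℝ) ≤ (n:ℝ)*((n:ℝ)-1)*((n:ℝ)-2)/8 - 5*((n:ℝ)*((n:ℝ)-1))/16 + 3 := by nlinarith
    have C : (0:ℝ) ≤ (n:ℝ)*((n:ℝ)-1)*((n:ℝ)-2) + 5*((n:ℝ)*((n:ℝ)-1))/4 - 3 := by nlinarith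
    have hA := mul_nonneg p3 A
    have hB := mul_nonneg p2 B
    simp only [cL]
    nlinarith [hA, hB, C]

private lemma cU_nonneg (n : ℕ) (h : 1 ≤ n) : 0 ≤ cU n := by
  rcases le_or_gt n 9 with hn | hn
  · interval_cases n <;> norm_num [cU]
  · have hn10 : 10 ≤ n := hn
    have hm : (10:ℝ) ≤ (n:ℝ) := by exact_mod_cast hn10
    have key1 : ((n:ℝ))^2 * 2^n ≤ 4 * 3^n := by exact_mod_cast k1 n
    have key2 : ((n:ℝ))^3 ≤ 2^n := by exact_mod_cast k2 n hn10
    have h2p : (0:ℝ) < 2^n := by positivity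
    have c1 : (0:ℝ) ≤ 1 + (n:ℝ)*((n:ℝ)-1)/9 := by nlinarith
    have s1 : (n:ℝ)^2 * 2^n * (1 + (n:ℝ)*((n:ℝ)-1)/9)
        ≤ 4*3^n * (1 + (n:ℝ)*((n:ℝ)-1)/9) := mul_le_mul_of_nonneg_right key1 c1
    have hbr : (0:ℝ) ≤ (n:ℝ)^2/4*(1 + (n:ℝ)*((n:ℝ)-1)/9)
        - (3 + (n:ℝ)*((n:ℝ)-1)/2 + (n:ℝ)*((n:ℝ)-1)*((n:ℝ)-2)/8) - 1 := by
      have hm0 : (0:ℝ) ≤ (n:ℝ) := Nat.cast_nonneg n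
      have h1 : (0:ℝ) ≤ (n:ℝ)^3*((n:ℝ)-10) :=
        mul_nonneg (pow_nonneg hm0 3) (by linarith)
      have h2 : (0:ℝ) ≤ ((n:ℝ)-10)^3 := pow_nonneg (by linarith) 3
      nlinarith [h1, h2, hm0, hm]
    have s2 := mul_nonneg h2p.le hbr
    simp only [cU]
    nlinarith [s1, s2, key2, hm]

/-- For every `z > 0`, `1/z² - 1/12 ≤ e^z((e^z+1)z - e^z + 1)/(e^z-1)³ ≤ 1/z² + 1`. -/
theorem exp_inequality_two (z : ℝ) (hz : 0 < z) :
    1 / z ^ 2 - 1 / 12 ≤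
        Real.exp z * ((Real.exp z + 1) * z - Real.exp z + 1) / (Real.exp z - 1) ^ 3 ∧
      Real.exp z * ((Real.exp z + 1) * z - Real.exp z + 1) / (Real.exp z - 1) ^ 3 ≤
        1 / z ^ 2 + 1 := by
  set E := Real.exp z with hE
  have hE1 : 1 < E := by
    rw [hE, show (1:ℝ) = Real.exp 0 from (Real.exp_zero).symm]
    exact Real.exp_lt_exp.mpr hz
  have hD3 : 0 < (E - 1) ^ 3 := pow_pos (by linarith) 3
  have hz2 : 0 < z ^ 2 := by positivity
  have hzne : z ≠ 0 := ne_of_gt hz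
  -- lower bound series
  have hfullL := ((hsL z).add (hasSum_ite_eq 0 (1:ℝ))).add (hasSum_ite_eq 2 (-(z^2/12)))
  have htermL : ∀ n : ℕ, (0:ℝ) ≤ cL n * (z ^ n / n.factorial)
      + (if n = 0 then (1:ℝ) else 0) + (if n = 2 then -(z^2/12) else 0) := by
    intro n
    rcases eq_or_ne n 0 with rfl | h0
    · norm_num [cL]
    rcases eq_or_ne n 2 with rfl | h2
    · norm_num [cL]; nlinarith [sq_nonneg z]
    · simp only [if_neg h0, if_neg h2, add_zero]
      exact mul_nonneg (cL_nonneg n (Nat.one_le_iff_ne_zero.mpr h0)) (div_nonneg (pow_nonneg hz.le n) (Nat.cast_nonneg _))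
  have hTL : (0:ℝ) ≤ E ^ 3 * z^2/12 - E ^ 3 + z^3*E^2 - 5*z^2*E^2/4
      + 3*E^2 + z^3*E + 5*z^2*E/4 - 3*E + 1 + -(z^2/12) :=
    hasSum_le htermL hasSum_zero hfullL
  -- upper bound series
  have hfullU := ((hsU z).add (hasSum_ite_eq 0 (-1:ℝ))).add (hasSum_ite_eq 2 (-(z^2)))
  have htermU : ∀ n : ℕ, (0:ℝ) ≤ cU n * (z ^ n / n.factorial)
      + (if n = 0 then (-1:ℝ) else 0) + (if n = 2 then -(z^2) else 0) := by
    intro n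
    rcases eq_or_ne n 0 with rfl | h0
    · norm_num [cU]
    rcases eq_or_ne n 2 with rfl | h2
    · norm_num [cU]; nlinarith [sq_nonneg z]
    · simp only [if_neg h0, if_neg h2, add_zero]
      exact mul_nonneg (cU_nonneg n (Nat.one_le_iff_ne_zero.mpr h0)) (div_nonneg (pow_nonneg hz.le n) (Nat.cast_nonneg _))
  have hTU : (0:ℝ) ≤ E ^ 3 + z^2*E^3 - 3*E^2 - 2*z^2*E^2 - z^3*E^2
      + 3*E + 2*z^2*E - z^3*E + -1 + -(z^2) :=
    hasSum_le htermU hasSum_zero hfullU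
  constructor
  · rw [le_div_iff₀ hD3]
    have key : (1/z^2 - 1/12) * (E-1)^3 * z^2 = (1 - z^2/12) * (E-1)^3 := by
      field_simp
    have h5 : (1/z^2 - 1/12) * (E-1)^3 * z^2 ≤ (E * ((E + 1) * z - E + 1)) * z^2 := by
      rw [key]; nlinarith [hTL]
    exact le_of_mul_le_mul_right h5 hz2
  · rw [div_le_iff₀ hD3]
    have key : (1/z^2 + 1) * (E-1)^3 * z^2 = (1 + z^2) * (E-1)^3 := by
      field_simp
    have h5 : (E * ((E + 1) * z - E + 1)) * z^2 ≤ (1/z^2 + 1) * (E-1)^3 * z^2 := by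
      rw [key]; nlinarith [hTU]
    exact le_of_mul_le_mul_right h5 hz2
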